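/- Let ξ_1, …, ξ_n be i.i.d. points distributed according to an absolutely continuous probability measure μ on a regular closed set K ⊆ ℝ^d belonging to the extended convex ring. Then the random set X_n := ⋂_{i=1}^n (K − ξ_i) is almost surely regular closed. -/

import Mathlib

open MeasureTheory Set Filter Topology Pointwise ProbabilityTheory

namespace RC

variable {d : ℕ}

local notation "E" => EuclideanSpace ℝ (Fin d)

/-- A convex set with nonempty interior is contained in the closure of its interior. -/
lemma subset_closure_interior {s : Set E} (hs : Convex ℝ s)
    (h : (interior s).Nonempty) : s ⊆ closure (interior s) := by
  obtain ⟨y, hy⟩ := h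
  intro x hx
  rw [mem_closure_iff_seq_limit]
  refine ⟨fun k => x + (1 / (k + 1) : ℝ) • (y - x), fun k => ?_, ?_⟩
  · exact hs.add_smul_sub_mem_interior hx hy
      ⟨by positivity, by rw [div_le_one (by positivity)]; linarith [Nat.cast_nonneg (α := ℝ) k]⟩
  · have h1 : Tendsto (fun k : ℕ => (1 / (k + 1) : ℝ) • (y - x)) atTop (𝓝 ((0:ℝ) • (y - x))) :=
      (tendsto_one_div_add_atTop_nhds_zero_nat).smul_const _
    simpa using tendsto_const_nhds.add h1

lemma closure_sub_closure {s t : Set E} :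
    closure s - closure t ⊆ closure (s - t) := by
  rintro x hx
  rw [Set.mem_sub] at hx
  obtain ⟨a, ha, b, hb, rfl⟩ := hx
  obtain ⟨u, hu, hul⟩ := mem_closure_iff_seq_limit.1 ha
  obtain ⟨v, hv, hvl⟩ := mem_closure_iff_seq_limit.1 hb
  exact mem_closure_iff_seq_limit.2
    ⟨fun k => u k - v k, fun k => Set.sub_mem_sub (hu k) (hv k), hul.sub hvl⟩

lemma isOpen_sub_left {s t : Set E} (hs : IsOpen s) : IsOpen (s - t) := by
  have : s - t = ⋃ b ∈ t, (fun x => x + b) ⁻¹' s := by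
    ext x
    simp only [Set.mem_sub, mem_iUnion, mem_preimage]
    constructor
    · rintro ⟨a, ha, b, hb, rfl⟩; exact ⟨b, hb, by simpa using ha⟩
    · rintro ⟨b, hb, hxb⟩; exact ⟨x + b, hxb, b, hb, add_sub_cancel_right x b⟩
  rw [this]
  exact isOpen_biUnion fun b _ => hs.preimage (continuous_add_right b)


/-- The basic piece: `A ∩ ⋂ i (C i - t i)` written with preimages. -/
def Pset (n : ℕ) (A : Set (EuclideanSpace ℝ (Fin d))) (C : Fin n → Set (EuclideanSpace ℝ (Fin d)))
    (t : Fin n → EuclideanSpace ℝ (Fin d)) : Set (EuclideanSpace ℝ (Fin d)) :=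
  A ∩ ⋂ i, (fun x => x + t i) ⁻¹' C i

lemma mem_Pset {n : ℕ} {A : Set E} {C : Fin n → Set E} {t : Fin n → E} {x : E} :
    x ∈ Pset n A C t ↔ x ∈ A ∧ ∀ i, x + t i ∈ C i := by
  simp [Pset]

lemma Pset_convex {n : ℕ} {A : Set E} {C : Fin n → Set E} {t : Fin n → E}
    (hA : Convex ℝ A) (hC : ∀ i, Convex ℝ (C i)) : Convex ℝ (Pset n A C t) := by
  refine hA.inter (convex_iInter fun i => ?_)
  have : (fun x : E => x + t i) ⁻¹' C i = (fun x : E => t i + x) ⁻¹' C i := by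
    ext x; simp [add_comm]
  rw [this]
  exact (hC i).translate_preimage_right _

lemma Pset_closed {n : ℕ} {A : Set E} {C : Fin n → Set E} {t : Fin n → E}
    (hA : IsClosed A) (hC : ∀ i, IsClosed (C i)) : IsClosed (Pset n A C t) :=
  hA.inter (isClosed_iInter fun i => (hC i).preimage (continuous_add_right _))

/-- Characterization of interior nonemptiness of a piece. -/
lemma interior_Pset_nonempty {n : ℕ} {A : Set E} {C : Fin n → Set E} {t : Fin n → E} :
    (interior (Pset n A C t)).Nonempty ↔
      ∃ x, x ∈ interior A ∧ ∀ i, x + t i ∈ interior (C i) := by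
  constructor
  · rintro ⟨x, hx⟩
    refine ⟨x, interior_mono inter_subset_left hx, fun i => ?_⟩
    have h1 : x ∈ interior ((fun y : E => y + t i) ⁻¹' C i) :=
      interior_mono (inter_subset_right.trans (iInter_subset _ i)) hx
    have h2 : (fun y : E => y + t i) ⁻¹' interior (C i) =
        interior ((fun y : E => y + t i) ⁻¹' C i) :=
      (Homeomorph.addRight (t i)).preimage_interior (C i)
    rw [← h2] at h1
    exact h1
  · rintro ⟨x, hxA, hxC⟩
    have hopen : IsOpen (interior A ∩ ⋂ i, (fun y : E => y + t i) ⁻¹' interior (C i)) :=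
      isOpen_interior.inter (isOpen_iInter_of_finite fun i =>
        isOpen_interior.preimage (continuous_add_right _))
    have hsub : interior A ∩ (⋂ i, (fun y : E => y + t i) ⁻¹' interior (C i)) ⊆ Pset n A C t := by
      intro y hy
      exact mem_Pset.2 ⟨interior_subset hy.1,
        fun i => interior_subset (by exact mem_iInter.1 hy.2 i)⟩
    exact ⟨x, interior_maximal hsub hopen (by simp only [mem_inter_iff, mem_iInter]; exact ⟨hxA, hxC⟩)⟩

/-- The "bad" set of translation vectors. -/
def Bad (n : ℕ) (A : Set (EuclideanSpace ℝ (Fin d)))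
    (C : Fin n → Set (EuclideanSpace ℝ (Fin d))) : Set (Fin n → EuclideanSpace ℝ (Fin d)) :=
  {t | (Pset n A C t).Nonempty ∧ ¬ (interior (Pset n A C t)).Nonempty}

lemma Bad_measurable {n : ℕ} {A : Set E} {C : Fin n → Set E}
    (hAc : IsClosed A) (hCc : ∀ i, IsCompact (C i)) :
    MeasurableSet (Bad n A C) := by
  cases n with
  | zero =>
      by_cases h : (Bad 0 A C) = ∅
      · rw [h]; exact MeasurableSet.empty
      · -- the set is determined by a constant proposition; it is `univ` or `∅`
        have : Bad 0 A C = univ := by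
          obtain ⟨t₀, ht₀⟩ := nonempty_iff_ne_empty.2 h
          ext t
          have hPeq : Pset 0 A C t = Pset 0 A C t₀ := by
            simp [Pset]
          simp only [Bad, mem_setOf_eq, mem_univ, iff_true]
          rw [hPeq]; exact ht₀
        rw [this]; exact MeasurableSet.univ
  | succ m =>
      have hN : IsClosed {t : Fin (m+1) → E | (Pset (m+1) A C t).Nonempty} := by
        refine IsSeqClosed.isClosed ?_
        intro ts t hts htl
        choose x hx using fun k => hts k
        have hx1 := fun k => (mem_Pset.1 (hx k)).1
        have hx2 := fun k => (mem_Pset.1 (hx k)).2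
        have hc : ∀ k, x k + ts k 0 ∈ C 0 := fun k => hx2 k 0
        obtain ⟨z, hz, φ, hφ, hzl⟩ := (hCc 0).tendsto_subseq hc
        have htcoord : ∀ i, Tendsto (fun k => ts (φ k) i) atTop (𝓝 (t i)) := by
          intro i
          exact (tendsto_pi_nhds.1 (htl.comp hφ.tendsto_atTop)) i
        have hxl : Tendsto (fun k => x (φ k)) atTop (𝓝 (z - t 0)) := by
          have : (fun k => x (φ k)) = fun k => (x (φ k) + ts (φ k) 0) - ts (φ k) 0 := by
            funext k; abel
          rw [this]
          exact hzl.sub (htcoord 0)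
        refine ⟨z - t 0, mem_Pset.2 ⟨?_, fun i => ?_⟩⟩
        · exact hAc.mem_of_tendsto hxl (Eventually.of_forall fun k => hx1 (φ k))
        · refine (hCc i).isClosed.mem_of_tendsto (hxl.add (htcoord i))
            (Eventually.of_forall fun k => hx2 (φ k) i)
      have hI : IsOpen {t : Fin (m+1) → E |
          ∃ x, x ∈ interior A ∧ ∀ i, x + t i ∈ interior (C i)} := by
        have : {t : Fin (m+1) → E | ∃ x, x ∈ interior A ∧ ∀ i, x + t i ∈ interior (C i)} =
            ⋃ x ∈ interior A, ⋂ i, (fun t : Fin (m+1) → E => x + t i) ⁻¹' interior (C i) := by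
          ext t; simp [mem_iUnion, mem_iInter]
        rw [this]
        exact isOpen_biUnion fun x _ => isOpen_iInter_of_finite fun i =>
          isOpen_interior.preimage (continuous_const.add (continuous_apply i))
      have : Bad (m+1) A C = {t : Fin (m+1) → E | (Pset (m+1) A C t).Nonempty} ∩
          {t : Fin (m+1) → E | ∃ x, x ∈ interior A ∧ ∀ i, x + t i ∈ interior (C i)}ᶜ := by
        ext t
        simp only [Bad, mem_setOf_eq, mem_inter_iff, mem_compl_iff]
        rw [interior_Pset_nonempty]
      rw [this]
      exact hN.measurableSet.inter hI.measurableSet.compl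


lemma Bad_zero_empty {A : Set E} {C : Fin 0 → Set E}
    (hAf : A.Nonempty → (interior A).Nonempty) : Bad 0 A C = ∅ := by
  ext t
  simp only [Bad, mem_setOf_eq, mem_empty_iff_false, iff_false, not_and, not_not]
  intro hne
  have hA : A.Nonempty := by
    obtain ⟨x, hx⟩ := hne; exact ⟨x, (mem_Pset.1 hx).1⟩
  obtain ⟨x, hx⟩ := hAf hA
  exact interior_Pset_nonempty.2 ⟨x, hx, fun i => i.elim0⟩

/-- Key lemma: the set of bad translation vectors is null. -/
lemma bad_null (μ : Measure (EuclideanSpace ℝ (Fin d))) [IsProbabilityMeasure μ]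
    (hac : μ ≪ volume) (A : Set (EuclideanSpace ℝ (Fin d)))
    (hAv : Convex ℝ A) (hAc : IsClosed A) (hAf : A.Nonempty → (interior A).Nonempty) :
    ∀ (n : ℕ) (C : Fin n → Set (EuclideanSpace ℝ (Fin d))),
      (∀ i, IsCompact (C i)) → (∀ i, Convex ℝ (C i)) → (∀ i, (interior (C i)).Nonempty) →
      (Measure.pi fun _ : Fin n => μ) (Bad n A C) = 0 := by
  intro n
  induction n with
  | zero =>
      intro C _ _ _
      rw [Bad_zero_empty hAf]
      exact measure_empty
  | succ m ih =>
      intro C hCc hCv hCf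
      set C' : Fin m → Set (EuclideanSpace ℝ (Fin d)) := fun i => C i.castSucc with hC'def
      have hsplit : ∀ (t' : Fin m → E) (s : E),
          Pset (m+1) A C (Fin.snoc t' s) =
            Pset m A C' t' ∩ (fun x => x + s) ⁻¹' C (Fin.last m) := by
        intro t' s
        ext x
        simp only [mem_Pset, mem_inter_iff, mem_preimage, Fin.forall_fin_succ',
          Fin.snoc_castSucc, Fin.snoc_last, hC'def]
        tauto
      set g : (Fin m → EuclideanSpace ℝ (Fin d)) × EuclideanSpace ℝ (Fin d) →
          (Fin (m+1) → EuclideanSpace ℝ (Fin d)) := fun q => Fin.snoc q.1 q.2 with hgdef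
      set e := MeasurableEquiv.piFinSuccAbove (fun _ : Fin (m+1) => EuclideanSpace ℝ (Fin d))
        (Fin.last m) with hedef
      have h1 : MeasurePreserving e (Measure.pi fun _ : Fin (m+1) => μ)
          (μ.prod (Measure.pi fun _ : Fin m => μ)) :=
        measurePreserving_piFinSuccAbove (fun _ => μ) (Fin.last m)
      have hg : ∀ q : (Fin m → EuclideanSpace ℝ (Fin d)) × EuclideanSpace ℝ (Fin d),
          g q = e.symm (q.2, q.1) := by
        intro q
        simp only [hgdef, hedef, MeasurableEquiv.piFinSuccAbove_symm_apply,
          Fin.insertNthEquiv_last]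
        rfl
      have hgmp : MeasurePreserving g
          ((Measure.pi fun _ : Fin m => μ).prod μ) (Measure.pi fun _ : Fin (m+1) => μ) := by
        have h2 := (h1.symm e).comp Measure.measurePreserving_swap
        have : g = ⇑e.symm ∘ Prod.swap := by
          funext q; rw [hg q]; rfl
        rw [this]
        exact h2
      have hBmeas : MeasurableSet (Bad (m+1) A C) := Bad_measurable hAc hCc
      rw [← hgmp.measure_preimage hBmeas.nullMeasurableSet]
      rw [Measure.measure_prod_null (hgmp.measurable hBmeas)]
      have hC'c : ∀ i, IsCompact (C' i) := fun i => hCc _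
      have hC'v : ∀ i, Convex ℝ (C' i) := fun i => hCv _
      have hC'f : ∀ i, (interior (C' i)).Nonempty := fun i => hCf _
      have hbase : ∀ᵐ t' ∂(Measure.pi fun _ : Fin m => μ), t' ∉ Bad m A C' :=
        measure_eq_zero_iff_ae_notMem.1 (ih C' hC'c hC'v hC'f)
      filter_upwards [hbase] with t' ht'
      show μ (Prod.mk t' ⁻¹' (g ⁻¹' Bad (m+1) A C)) = 0
      have hsec : Prod.mk t' ⁻¹' (g ⁻¹' Bad (m+1) A C) =
          {s : EuclideanSpace ℝ (Fin d) |
            (Pset m A C' t' ∩ (fun x => x + s) ⁻¹' C (Fin.last m)).Nonempty ∧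
            ¬ (interior (Pset m A C' t' ∩ (fun x => x + s) ⁻¹' C (Fin.last m))).Nonempty} := by
        ext s
        simp only [mem_preimage, Bad, mem_setOf_eq, hgdef]
        rw [hsplit t' s]
      rw [hsec]
      by_cases hP' : (Pset m A C' t').Nonempty
      · have hintP' : (interior (Pset m A C' t')).Nonempty := by
          by_contra h
          exact ht' ⟨hP', h⟩
        set W := interior (C (Fin.last m)) - interior (Pset m A C' t') with hWdef
        have hWo : IsOpen W := isOpen_sub_left isOpen_interior
        have hWc : Convex ℝ W := ((hCv _).interior).sub ((Pset_convex hAv hC'v).interior)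
        have hfr : μ (frontier W) = 0 := hac (hWc.addHaar_frontier volume)
        refine measure_mono_null ?_ hfr
        intro s hs
        obtain ⟨hne, hint⟩ := hs
        rw [hWo.frontier_eq]
        constructor
        · -- s ∈ closure W
          obtain ⟨x0, hx0P, hx0C⟩ := hne
          rw [mem_preimage] at hx0C
          have h1' : x0 + s ∈ closure (interior (C (Fin.last m))) :=
            subset_closure_interior (hCv _) (hCf _) hx0C
          have h2' : x0 ∈ closure (interior (Pset m A C' t')) :=
            subset_closure_interior (Pset_convex hAv hC'v) hintP' hx0P
          have hrepr : s = (x0 + s) - x0 := by abel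
          rw [hWdef, hrepr]
          exact closure_sub_closure (Set.sub_mem_sub h1' h2')
        · -- s ∉ W
          intro hsW
          rw [hWdef, Set.mem_sub] at hsW
          obtain ⟨c, hc, p, hp, hcp⟩ := hsW
          apply hint
          have hopen : IsOpen (interior (Pset m A C' t') ∩
              (fun x => x + s) ⁻¹' interior (C (Fin.last m))) :=
            isOpen_interior.inter (isOpen_interior.preimage (continuous_add_right _))
          have hsubset : interior (Pset m A C' t') ∩
              (fun x => x + s) ⁻¹' interior (C (Fin.last m)) ⊆
              Pset m A C' t' ∩ (fun x => x + s) ⁻¹' C (Fin.last m) :=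
            inter_subset_inter interior_subset (preimage_mono interior_subset)
          have hpmem : p ∈ interior (Pset m A C' t') ∩
              (fun x => x + s) ⁻¹' interior (C (Fin.last m)) := by
            refine ⟨hp, ?_⟩
            rw [mem_preimage]
            have : p + s = c := by rw [← hcp]; abel
            rw [this]; exact hc
          exact ⟨p, interior_maximal hsubset hopen hpmem⟩
      · refine measure_mono_null (fun s hs => ?_) (measure_empty (μ := μ))
        exfalso
        obtain ⟨⟨x, hx, _⟩, _⟩ := hs
        exact hP' ⟨x, hx⟩

lemma thin_null {s : Set E} (hs : Convex ℝ s) (h : ¬ (interior s).Nonempty) :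
    volume s = 0 := by
  have hsub : s ⊆ frontier s := by
    rw [frontier, not_nonempty_iff_eq_empty.1 h, diff_empty]
    exact subset_closure
  exact measure_mono_null hsub (hs.addHaar_frontier volume)

/-- A regular closed locally finite union of convex bodies is the union of its
fat pieces. -/
lemma decomp (K : Set (EuclideanSpace ℝ (Fin d))) (KA : ℕ → Set (EuclideanSpace ℝ (Fin d)))
    (hKA : ∀ i, IsCompact (KA i) ∧ Convex ℝ (KA i) ∧ (KA i).Nonempty)
    (hKloc : LocallyFinite KA) (hKU : K = ⋃ i, KA i)
    (hKreg : K = closure (interior K)) :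
    K = ⋃ j : {j : ℕ // (interior (KA j)).Nonempty}, KA j := by
  have hclosed : IsClosed (⋃ j : {j : ℕ // (interior (KA j)).Nonempty}, KA j) :=
    (hKloc.comp_injective Subtype.val_injective).isClosed_iUnion
      (fun j => (hKA j.1).1.isClosed)
  apply Subset.antisymm
  · have hint : interior K ⊆ closure (⋃ j : {j : ℕ // (interior (KA j)).Nonempty}, KA j.1) := by
      intro y hy
      rw [mem_closure_iff]
      intro o ho hyo
      obtain ⟨ε, hε, hball⟩ := Metric.isOpen_iff.1 (ho.inter isOpen_interior) y ⟨hyo, hy⟩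
      by_contra hempty
      rw [not_nonempty_iff_eq_empty] at hempty
      have hcover : Metric.ball y ε ⊆ ⋃ i ∈ {i : ℕ | ¬ (interior (KA i)).Nonempty}, KA i := by
        intro z hz
        have hzK : z ∈ K := interior_subset (hball hz).2
        rw [hKU] at hzK
        obtain ⟨i, hi⟩ := mem_iUnion.1 hzK
        rcases Classical.em ((interior (KA i)).Nonempty) with hfat | hthin
        · exfalso
          have : z ∈ o ∩ ⋃ j : {j : ℕ // (interior (KA j)).Nonempty}, KA j.1 :=
            ⟨(hball hz).1, mem_iUnion.2 ⟨⟨i, hfat⟩, hi⟩⟩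
          rw [hempty] at this
          exact this
        · exact mem_biUnion hthin hi
      have hnull : volume (⋃ i ∈ {i : ℕ | ¬ (interior (KA i)).Nonempty}, KA i) = 0 :=
        measure_biUnion_null_iff (to_countable _) |>.2
          (fun i hi => thin_null (hKA i).2.1 hi)
      exact (Metric.measure_ball_pos volume y hε).ne' (measure_mono_null hcover hnull)
    calc K = closure (interior K) := hKreg
      _ ⊆ closure (closure (⋃ j : {j : ℕ // (interior (KA j)).Nonempty}, KA j.1)) :=
          closure_mono hint
      _ = closure (⋃ j : {j : ℕ // (interior (KA j)).Nonempty}, KA j.1) := closure_closure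
      _ = ⋃ j : {j : ℕ // (interior (KA j)).Nonempty}, KA j.1 := hclosed.closure_eq
  · exact iUnion_subset fun j => hKU ▸ subset_iUnion KA j.1

/-- Deterministic step: for good translation tuples the intersection is regular closed. -/
lemma det {n : ℕ} (K : Set (EuclideanSpace ℝ (Fin d))) (KA : ℕ → Set (EuclideanSpace ℝ (Fin d)))
    (hKA : ∀ i, IsCompact (KA i) ∧ Convex ℝ (KA i) ∧ (KA i).Nonempty)
    (hKloc : LocallyFinite KA) (hKU : K = ⋃ i, KA i)
    (hKreg : K = closure (interior K)) (t : Fin n → EuclideanSpace ℝ (Fin d))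
    (ht : ∀ f : Fin n → {j : ℕ // (interior (KA j)).Nonempty},
      t ∉ Bad n univ (fun i => KA (f i))) :
    (⋂ i, (fun x => x + t i) ⁻¹' K) = closure (interior (⋂ i, (fun x => x + t i) ⁻¹' K)) := by
  set X := ⋂ i, (fun x : E => x + t i) ⁻¹' K with hXdef
  have hKclosed : IsClosed K := by
    rw [hKU]; exact hKloc.isClosed_iUnion fun i => (hKA i).1.isClosed
  have hXclosed : IsClosed X :=
    isClosed_iInter fun i => hKclosed.preimage (continuous_add_right _)
  refine Subset.antisymm ?_ (closure_minimal interior_subset hXclosed)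
  intro x hx
  have hKdec := decomp K KA hKA hKloc hKU hKreg
  have hx' : ∀ i, x + t i ∈ ⋃ j : {j : ℕ // (interior (KA j)).Nonempty}, KA j := by
    intro i
    rw [← hKdec]
    exact mem_preimage.1 (mem_iInter.1 hx i)
  choose f hf using fun i => mem_iUnion.1 (hx' i)
  have hxP : x ∈ Pset n univ (fun i => KA (f i)) t := mem_Pset.2 ⟨mem_univ x, hf⟩
  have hPint : (interior (Pset n univ (fun i => KA (f i)) t)).Nonempty := by
    by_contra h
    exact ht f ⟨⟨x, hxP⟩, h⟩
  have hPconv : Convex ℝ (Pset n univ (fun i => KA (f i)) t) :=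
    Pset_convex convex_univ fun i => (hKA (f i)).2.1
  have hsub : Pset n univ (fun i => KA (f i)) t ⊆ X := by
    intro y hy
    refine mem_iInter.2 fun i => ?_
    have := (mem_Pset.1 hy).2 i
    rw [mem_preimage, hKU]
    exact mem_iUnion.2 ⟨f i, this⟩
  have hxc : x ∈ closure (interior (Pset n univ (fun i => KA (f i)) t)) :=
    subset_closure_interior hPconv hPint hxP
  exact closure_mono (interior_mono hsub) hxc

/-- The joint law of independent random points is the product measure. -/
lemma joint_law {n : ℕ} {Ω : Type*} [MeasureSpace Ω] [IsProbabilityMeasure (ℙ : Measure Ω)]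
    (μ : Measure (EuclideanSpace ℝ (Fin d))) [IsProbabilityMeasure μ]
    (ξ : Fin n → Ω → EuclideanSpace ℝ (Fin d))
    (hmeas : ∀ i, Measurable (ξ i))
    (hindep : iIndepFun ξ ℙ)
    (hlaw : ∀ i, Measure.map (ξ i) ℙ = μ) :
    Measure.map (fun ω (i : Fin n) => ξ i ω) ℙ = Measure.pi fun _ : Fin n => μ := by
  have hϕ : Measurable (fun ω (i : Fin n) => ξ i ω) :=
    measurable_pi_lambda _ fun i => hmeas i
  refine (Measure.pi_eq fun s hs => ?_).symm
  rw [Measure.map_apply hϕ (MeasurableSet.univ_pi hs)]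
  have hpre : (fun ω (i : Fin n) => ξ i ω) ⁻¹' (univ.pi s) = ⋂ i, ξ i ⁻¹' s i := by
    ext ω; simp [Set.mem_pi]
  rw [hpre]
  have hbig : (⋂ i, ξ i ⁻¹' s i) = ⋂ i ∈ Finset.univ, ξ i ⁻¹' s i := by simp
  rw [hbig, hindep.measure_inter_preimage_eq_mul Finset.univ (fun i _ => hs i)]
  refine Finset.prod_congr rfl fun i _ => ?_
  rw [← hlaw i, Measure.map_apply (hmeas i) (hs i)]

end RC

open MeasureTheory ProbabilityTheory RC Set

theorem Xn_ae_regular_closed {d n : ℕ} {Ω : Type*} [MeasureSpace Ω]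
    [IsProbabilityMeasure (ℙ : Measure Ω)]
    (μ : Measure (EuclideanSpace ℝ (Fin d))) [IsProbabilityMeasure μ]
    (hac : μ ≪ volume)
    (K : Set (EuclideanSpace ℝ (Fin d)))
    (KA : ℕ → Set (EuclideanSpace ℝ (Fin d)))
    (hKA : ∀ i, IsCompact (KA i) ∧ Convex ℝ (KA i) ∧ (KA i).Nonempty)
    (hKloc : LocallyFinite KA) (hKU : K = ⋃ i, KA i)
    (hKreg : K = closure (interior K)) (hμK : μ K = 1)
    (ξ : Fin n → Ω → EuclideanSpace ℝ (Fin d))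
    (hmeas : ∀ i, Measurable (ξ i))
    (hindep : iIndepFun ξ ℙ)
    (hlaw : ∀ i, Measure.map (ξ i) ℙ = μ) :
    ∀ᵐ ω ∂(ℙ : Measure Ω),
      (⋂ i, (fun k => k - ξ i ω) '' K) =
        closure (interior (⋂ i, (fun k => k - ξ i ω) '' K)) := by
  have himg : ∀ (c : EuclideanSpace ℝ (Fin d)),
      (fun k => k - c) '' K = (fun x => x + c) ⁻¹' K := by
    intro c
    ext y
    constructor
    · rintro ⟨k, hk, rfl⟩
      simpa [sub_add_cancel] using hk
    · intro hy
      exact ⟨y + c, hy, add_sub_cancel_right y c⟩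
  have hgoal : ∀ ω, (⋂ i, (fun k => k - ξ i ω) '' K) = ⋂ i, (fun x => x + ξ i ω) ⁻¹' K := by
    intro ω; exact iInter_congr fun i => himg (ξ i ω)
  set BadU : Set (Fin n → EuclideanSpace ℝ (Fin d)) :=
    ⋃ f : Fin n → {j : ℕ // (interior (KA j)).Nonempty}, Bad n univ (fun i => KA (f i))
    with hBadUdef
  have hfatU : (interior (univ : Set (EuclideanSpace ℝ (Fin d)))).Nonempty := by
    rw [interior_univ]; exact ⟨0, mem_univ 0⟩
  have hBadUnull : (Measure.pi fun _ : Fin n => μ) BadU = 0 :=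
    measure_iUnion_null fun f =>
      bad_null μ hac univ convex_univ isClosed_univ (fun _ => hfatU) n
        (fun i => KA (f i)) (fun i => (hKA (f i)).1) (fun i => (hKA (f i)).2.1)
        (fun i => (f i).2)
  have hBadUmeas : MeasurableSet BadU :=
    MeasurableSet.iUnion fun f => Bad_measurable isClosed_univ fun i => (hKA (f i)).1
  have hϕ : Measurable (fun ω (i : Fin n) => ξ i ω) :=
    measurable_pi_lambda _ fun i => hmeas i
  have hnull : ℙ ((fun ω (i : Fin n) => ξ i ω) ⁻¹' BadU) = 0 := by
    rw [← Measure.map_apply hϕ hBadUmeas, joint_law μ ξ hmeas hindep hlaw]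
    exact hBadUnull
  rw [ae_iff]
  refine measure_mono_null ?_ hnull
  intro ω hω
  rw [mem_setOf_eq] at hω
  rw [mem_preimage]
  by_contra hmem
  apply hω
  rw [hgoal ω]
  refine det K KA hKA hKloc hKU hKreg (fun i => ξ i ω) ?_
  intro f hf
  exact hmem (mem_iUnion.2 ⟨f, hf⟩)
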